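/- Let f : (0,∞) → ℝ be convex with f(1) = 0, and suppose the limits A = lim_{x→0⁺} f(x) and B = lim_{x→0⁺} x·f(1/x) exist and are finite. Then for any probability mass functions P and Q on a finite nonempty set S with P(s) > 0 and Q(s) > 0 for all s ∈ S, the f-divergence satisfies D_f(P‖Q) = Σ_{s∈S} Q(s)·f(P(s)/Q(s)) ≤ A + B. -/

import Mathlib

open Real Finset Filter

/-- Upper bound on f-divergences: if `f` is convex on `(0,∞)` with `f 1 = 0`, and both
`f` and its conjugate `x ↦ x * f (1/x)` have finite limits `A` and `B` as `x → 0⁺`, then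
the f-divergence `D_f(P‖Q) = ∑ s, Q s * f (P s / Q s)` is bounded above by `A + B`. -/
theorem fDiv_le_of_tendsto {S : Type*} [Fintype S] [Nonempty S]
    (f : ℝ → ℝ) (A B : ℝ)
    (hconv : ConvexOn ℝ (Set.Ioi (0 : ℝ)) f) (hf1 : f 1 = 0)
    (hA : Tendsto f (nhdsWithin (0 : ℝ) (Set.Ioi 0)) (nhds A))
    (hB : Tendsto (fun x : ℝ => x * f (1 / x)) (nhdsWithin (0 : ℝ) (Set.Ioi 0)) (nhds B))
    (P Q : S → ℝ)
    (hP_pos : ∀ s, 0 < P s) (hQ_pos : ∀ s, 0 < Q s)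
    (hP_sum : ∑ s, P s = 1) (hQ_sum : ∑ s, Q s = 1) :
    ∑ s, Q s * f (P s / Q s) ≤ A + B := by
  have key : ∀ x : ℝ, 0 < x → f x ≤ A + x * B := by
    intro x hx
    have h1 : Tendsto (fun t : ℝ => (1 - x*t)/(1 - t^2)) (nhdsWithin 0 (Set.Ioi 0)) (nhds 1) := by
      have hc : ContinuousAt (fun t : ℝ => (1 - x*t)/(1 - t^2)) 0 := by
        apply ContinuousAt.div
        · fun_prop
        · fun_prop
        · norm_num
      have := hc.tendsto.mono_left (nhdsWithin_le_nhds (s := Set.Ioi (0:ℝ)))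
      simpa using this
    have h2 : Tendsto (fun t : ℝ => (x - t)/(1 - t^2)) (nhdsWithin 0 (Set.Ioi 0)) (nhds x) := by
      have hc : ContinuousAt (fun t : ℝ => (x - t)/(1 - t^2)) 0 := by
        apply ContinuousAt.div
        · fun_prop
        · fun_prop
        · norm_num
      have := hc.tendsto.mono_left (nhdsWithin_le_nhds (s := Set.Ioi (0:ℝ)))
      simpa using this
    have hF : Tendsto (fun t : ℝ => (1 - x*t)/(1 - t^2) * f t
        + (x - t)/(1 - t^2) * (t * f (1/t)))
        (nhdsWithin 0 (Set.Ioi 0)) (nhds (A + x * B)) := by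
      have := (h1.mul hA).add (h2.mul hB)
      simpa using this
    refine ge_of_tendsto hF ?_
    have hδ : (0:ℝ) < min x (min 1 x⁻¹) := by positivity
    filter_upwards [Ioo_mem_nhdsGT_of_mem (Set.mem_Ico.2 ⟨le_refl 0, hδ⟩)] with t ht
    obtain ⟨ht0, htδ⟩ := ht
    have htx : t < x := lt_of_lt_of_le htδ (min_le_left _ _)
    have ht1 : t < 1 := lt_of_lt_of_le htδ (le_trans (min_le_right _ _) (min_le_left _ _))
    have htxi : t < x⁻¹ := lt_of_lt_of_le htδ (le_trans (min_le_right _ _) (min_le_right _ _))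
    have hxt : x * t < 1 := by
      have := mul_lt_mul_of_pos_left htxi hx
      rwa [mul_inv_cancel₀ hx.ne'] at this
    have ht2 : 0 < 1 - t^2 := by nlinarith
    set a := (1 - x*t)/(1 - t^2) with ha_def
    set b := t*(x - t)/(1 - t^2) with hb_def
    have ha : 0 ≤ a := div_nonneg (by linarith) ht2.le
    have hb : 0 ≤ b := div_nonneg (by nlinarith) ht2.le
    have hab : a + b = 1 := by
      rw [ha_def, hb_def, ← add_div, div_eq_one_iff_eq ht2.ne']
      ring
    have hmem1 : t ∈ Set.Ioi (0:ℝ) := ht0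
    have hmem2 : (1/t : ℝ) ∈ Set.Ioi (0:ℝ) := by
      simp [Set.mem_Ioi]; positivity
    have hcvx := hconv.2 hmem1 hmem2 ha hb hab
    have hcomb : a • t + b • (1/t) = x := by
      simp only [smul_eq_mul, ha_def, hb_def]
      field_simp
      ring
    rw [hcomb] at hcvx
    calc f x ≤ a • f t + b • f (1/t) := hcvx
      _ = (1 - x*t)/(1 - t^2) * f t + (x - t)/(1 - t^2) * (t * f (1/t)) := by
          simp only [smul_eq_mul, ha_def, hb_def]; ring
  calc ∑ s, Q s * f (P s / Q s)
      ≤ ∑ s, Q s * (A + (P s / Q s) * B) := by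
        apply Finset.sum_le_sum
        intro s _
        exact mul_le_mul_of_nonneg_left (key _ (div_pos (hP_pos s) (hQ_pos s))) (hQ_pos s).le
    _ = ∑ s, (Q s * A + P s * B) := by
        apply Finset.sum_congr rfl
        intro s _
        rw [mul_add, ← mul_assoc, mul_div_cancel₀ _ (hQ_pos s).ne']
    _ = A + B := by
        rw [Finset.sum_add_distrib, ← Finset.sum_mul, ← Finset.sum_mul, hP_sum, hQ_sum]
        ring
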